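/- arXiv:2205.03244 — 2 statements merged into one kernel-verified Lean document; each statement's English description precedes it below -/
import Mathlib

section
/- Let g : [0, ∞) → (0, ∞) be a function such that log g is convex, and suppose there are constants C > 0 and λ > 0 such that g(κ) ≤ C e^{−λκ} for all κ greater than some κ₀. Then g(σ) ≤ e^{−λσ} g(0) for all σ ≥ 0. -/
theorem stmt_11 (g : ℝ → ℝ) (hg : ∀ σ, 0 ≤ σ → 0 < g σ)
    (hconv : ConvexOn ℝ (Set.Ici (0 : ℝ)) fun σ => Real.log (g σ))
    (C lam κ₀ : ℝ) (hC : 0 < C) (hlam : 0 < lam)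
    (hdecay : ∀ κ > κ₀, g κ ≤ C * Real.exp (-lam * κ)) :
    ∀ σ : ℝ, 0 ≤ σ → g σ ≤ Real.exp (-lam * σ) * g 0 := by
  intro σ hσ
  have hg0 := hg 0 le_rfl
  have hgσ := hg σ hσ
  set L : ℝ := Real.log (g 0) with hL
  have key : Real.log (g σ) ≤ L - lam * σ := by
    have hbound : ∀ x : ℝ, max (max σ κ₀) 1 < x →
        Real.log (g σ) ≤ L - lam * σ + (σ / x) * (Real.log C - L) := by
      intro x hx
      have hxσ : σ < x := lt_of_le_of_lt (le_max_left _ _ |>.trans (le_max_left _ _)) hx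
      have hxκ : κ₀ < x := lt_of_le_of_lt (le_max_right _ _ |>.trans (le_max_left _ _)) hx
      have hx1 : (1:ℝ) < x := lt_of_le_of_lt (le_max_right _ _) hx
      have hx0 : (0:ℝ) < x := lt_trans one_pos hx1
      have ht0 : 0 ≤ σ / x := div_nonneg hσ hx0.le
      have ht1 : σ / x ≤ 1 := (div_le_one hx0).mpr hxσ.le
      have hcv := hconv.2 (Set.mem_Ici.mpr le_rfl) (Set.mem_Ici.mpr hx0.le)
        (show (0:ℝ) ≤ 1 - σ / x by linarith) ht0 (by ring)
      have hpt : (1 - σ / x) • (0:ℝ) + (σ / x) • x = σ := by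
        rw [smul_eq_mul, smul_eq_mul]; field_simp; ring
      rw [hpt] at hcv
      have hgx : Real.log (g x) ≤ Real.log C - lam * x := by
        have := hdecay x hxκ
        calc Real.log (g x) ≤ Real.log (C * Real.exp (-lam * x)) :=
              Real.log_le_log (hg x hx0.le) this
          _ = Real.log C - lam * x := by
              rw [Real.log_mul hC.ne' (Real.exp_ne_zero _), Real.log_exp]; ring
      have hσx : (σ / x) * (lam * x) = lam * σ := by field_simp
      calc Real.log (g σ) ≤ (1 - σ / x) * L + (σ / x) * Real.log (g x) := hcv
        _ ≤ (1 - σ / x) * L + (σ / x) * (Real.log C - lam * x) := by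
            have := mul_le_mul_of_nonneg_left hgx ht0; linarith
        _ = L - lam * σ + (σ / x) * (Real.log C - L) := by
            field_simp
            ring
    have htend : Filter.Tendsto (fun x : ℝ => L - lam * σ + (σ / x) * (Real.log C - L))
        Filter.atTop (nhds (L - lam * σ)) := by
      have h1 : Filter.Tendsto (fun x : ℝ => σ / x) Filter.atTop (nhds 0) :=
        Filter.Tendsto.div_atTop tendsto_const_nhds Filter.tendsto_id
      have h2 := (h1.mul_const (Real.log C - L)).const_add (L - lam * σ)
      simpa using h2
    exact ge_of_tendsto htend (Filter.eventually_atTop.mpr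
      ⟨max (max σ κ₀) 1 + 1, fun x hx => hbound x (by linarith)⟩)
  calc g σ = Real.exp (Real.log (g σ)) := (Real.exp_log hgσ).symm
    _ ≤ Real.exp (L - lam * σ) := Real.exp_le_exp.mpr key
    _ = Real.exp (-lam * σ) * g 0 := by
        rw [Real.exp_sub, hL, Real.exp_log hg0, neg_mul, Real.exp_neg]; ring
end

section
/- Let f be a Dirichlet series in H^p with f(+∞) the constant coefficient, and suppose the pointwise estimate |g(s)| ≤ ζ(2 Re s)^{1/p} ‖g‖_{H^p} holds for every g ∈ H^p and Re s > 1/2. Then for every s = σ + it with σ ≥ 1, |f'(s)| ≤ 3 ζ(4/3)^{1/p} · 2^{−σ+1+1/p} ‖f‖_{H^p}, provided f has vanishing constant term and translation bound ‖T_{σ−1}(f − f(+∞))‖_{H^p} ≤ 2^{−(σ−1)} ‖f − f(+∞)‖_{H^p}. -/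
/-- The real zeta function `ζ(x) = ∑_{n ≥ 1} n^{-x}`. -/
noncomputable def realZeta (x : ℝ) : ℝ := ∑' n : ℕ, ((n : ℝ) + 1) ^ (-x)

lemma summable_aux {c : ℝ} (hc : 1 < c) :
    Summable (fun n : ℕ => ((n : ℝ) + 1) ^ (-c)) := by
  have h : Summable (fun n : ℕ => (n : ℝ) ^ (-c)) :=
    Real.summable_nat_rpow.mpr (by linarith)
  have := (summable_nat_add_iff 1).mpr h
  refine this.congr fun n => ?_
  push_cast
  ring_nf

lemma realZeta_nonneg (x : ℝ) : 0 ≤ realZeta x :=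
  tsum_nonneg fun n => Real.rpow_nonneg (by positivity) _

lemma one_le_realZeta {c : ℝ} (hc : 1 < c) : 1 ≤ realZeta c := by
  have h0 : ((0 : ℕ) + 1 : ℝ) ^ (-c) = 1 := by norm_num
  calc (1 : ℝ) = ((0 : ℕ) + 1 : ℝ) ^ (-c) := h0.symm
    _ ≤ realZeta c := Summable.le_tsum (summable_aux hc) 0
        fun n _ => Real.rpow_nonneg (by positivity) _

lemma realZeta_anti {x : ℝ} (hx : 4 / 3 ≤ x) : realZeta x ≤ realZeta (4 / 3) := by
  refine Summable.tsum_le_tsum (fun n => ?_) (summable_aux (by linarith : (1:ℝ) < x))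
    (summable_aux (by norm_num))
  exact Real.rpow_le_rpow_of_exponent_le (by push_cast; linarith [Nat.cast_nonneg (α := ℝ) n])
    (by linarith)

/-- Bound for the derivative of a Dirichlet series `f ∈ ℋ^p`: the space `ℋ^p` is
encoded by a membership predicate `Hp` and a norm `HpNorm`, subject to Bayart's
pointwise estimate for every `g ∈ ℋ^p`; `finf = f(+∞)` is the constant coefficient,
assumed to vanish, with `|f(+∞)| ≤ ‖f‖_{ℋ^p}`; and the translates
`T_{σ-1}(f - f(+∞))` belong to `ℋ^p` with the translation bound of Theorem C. -/
theorem stmt_16 (p : ℝ) (hp : 0 < p)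
    (Hp : Set (ℂ → ℂ)) (HpNorm : (ℂ → ℂ) → ℝ)
    (f : ℂ → ℂ) (hfHp : f ∈ Hp)
    (hdiff : DifferentiableOn ℂ f {s : ℂ | 1 / 2 < s.re})
    (hbayart : ∀ g ∈ Hp, ∀ s : ℂ, 1 / 2 < s.re →
      ‖g s‖ ≤ realZeta (2 * s.re) ^ (1 / p) * HpNorm g)
    (finf : ℂ) (hfinf : ‖finf‖ ≤ HpNorm f) (hvanish : finf = 0)
    (htransHp : ∀ σ : ℝ, 1 ≤ σ → (fun z => f (z + (σ - 1)) - finf) ∈ Hp)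
    (htrans : ∀ σ : ℝ, 1 ≤ σ →
      HpNorm (fun z => f (z + (σ - 1)) - finf) ≤
        2 ^ (-(σ - 1)) * HpNorm (fun z => f z - finf)) :
    ∀ s : ℂ, 1 ≤ s.re →
      ‖deriv f s‖ ≤
        3 * realZeta (4 / 3) ^ (1 / p) * 2 ^ (-s.re + 1 + 1 / p) * HpNorm f := by
  intro s hs
  set σ : ℝ := s.re with hσ
  set c : ℂ := (σ : ℂ) - 1 with hc
  set g : ℂ → ℂ := fun z => f (z + c) - finf with hg
  have hgHp : g ∈ Hp := htransHp σ hs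
  set w₀ : ℂ := s - c with hw₀
  have hw₀re : w₀.re = 1 := by simp [hw₀, hc, Complex.sub_re, Complex.ofReal_re, hσ]
  -- zeta positivity facts
  have hζ43 : (1 : ℝ) ≤ realZeta (4 / 3) := one_le_realZeta (by norm_num)
  have hζ43p : (0 : ℝ) < realZeta (4 / 3) ^ (1 / p) :=
    Real.rpow_pos_of_pos (by linarith) _
  -- nonnegativity of norms
  have hnormg : 0 ≤ HpNorm g := by
    have h2 : (1 / 2 : ℝ) < (2 : ℂ).re := by norm_num
    have := hbayart g hgHp 2 h2
    have habs : (0 : ℝ) ≤ ‖g 2‖ := norm_nonneg _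
    have hz : (0 : ℝ) < realZeta (2 * (2 : ℂ).re) ^ (1 / p) := by
      have : (1 : ℝ) ≤ realZeta (2 * (2 : ℂ).re) := by
        apply one_le_realZeta; norm_num
      exact Real.rpow_pos_of_pos (by linarith) _
    nlinarith
  have hnormf : 0 ≤ HpNorm f := le_trans (norm_nonneg _) hfinf
  -- differentiability of g on the closed ball
  have hopen : IsOpen {z : ℂ | 1 / 2 < z.re} := isOpen_lt continuous_const Complex.continuous_re
  have hgd : DifferentiableOn ℂ g (Metric.closedBall w₀ (1 / 3)) := by
    intro z hz
    have hzre : 2 / 3 ≤ z.re := by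
      have hdist : ‖z - w₀‖ ≤ 1 / 3 := by
        simpa [Complex.dist_eq] using Metric.mem_closedBall.mp hz
      have := (Complex.abs_re_le_norm (z - w₀)).trans hdist
      have h2 := abs_le.mp this
      simp only [Complex.sub_re, hw₀re] at h2
      linarith [h2.1]
    have hzc : (1 / 2 : ℝ) < (z + c).re := by
      simp only [hc, Complex.add_re, Complex.sub_re, Complex.ofReal_re, Complex.one_re]
      linarith
    have hf' : DifferentiableAt ℂ f (z + c) :=
      hdiff.differentiableAt (hopen.mem_nhds hzc)
    exact (DifferentiableAt.comp z hf'
      ((differentiable_id.add_const c).differentiableAt)).sub_const finf |>.differentiableWithinAt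
  have hdcc : DiffContOnCl ℂ g (Metric.ball w₀ (1 / 3)) := by
    apply DifferentiableOn.diffContOnCl
    rwa [closure_ball w₀ (by norm_num : (1/3 : ℝ) ≠ 0)]
  -- bound on the sphere
  set C : ℝ := realZeta (4 / 3) ^ (1 / p) * HpNorm g with hC
  have hsphere : ∀ z ∈ Metric.sphere w₀ (1 / 3), ‖g z‖ ≤ C := by
    intro z hz
    have hzre : 2 / 3 ≤ z.re := by
      have hdist : ‖z - w₀‖ = 1 / 3 := by
        simpa [Complex.dist_eq] using Metric.mem_sphere.mp hz
      have := (Complex.abs_re_le_norm (z - w₀)).trans hdist.le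
      have h2 := abs_le.mp this
      simp only [Complex.sub_re, hw₀re] at h2
      linarith [h2.1]
    have hzhalf : (1 / 2 : ℝ) < z.re := by linarith
    have hb := hbayart g hgHp z hzhalf
    have hζle : realZeta (2 * z.re) ^ (1 / p) ≤ realZeta (4 / 3) ^ (1 / p) :=
      Real.rpow_le_rpow (realZeta_nonneg _) (realZeta_anti (by linarith))
        (by positivity)
    calc ‖g z‖ ≤ realZeta (2 * z.re) ^ (1 / p) * HpNorm g := hb
      _ ≤ realZeta (4 / 3) ^ (1 / p) * HpNorm g := by
          exact mul_le_mul_of_nonneg_right hζle hnormg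
  -- Cauchy estimate
  have hcauchy : ‖deriv g w₀‖ ≤ C / (1 / 3) :=
    Complex.norm_deriv_le_of_forall_mem_sphere_norm_le (by norm_num) hdcc hsphere
  -- deriv g w₀ = deriv f s
  have hderiv : deriv g w₀ = deriv f s := by
    have h1 : deriv g w₀ = deriv (fun z => f (z + c)) w₀ := deriv_sub_const finf
    rw [h1, deriv_comp_add_const]
    congr 1
    simp [hw₀]
  rw [hderiv] at hcauchy
  -- translation bound
  have htrans' : HpNorm g ≤ 2 ^ (-(σ - 1)) * HpNorm f := by
    have := htrans σ hs
    have heq : (fun z => f z - finf) = f := by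
      funext z; rw [hvanish, sub_zero]
    rwa [heq] at this
  -- combine
  have hpow : (2 : ℝ) ^ (-(σ - 1)) ≤ 2 ^ (-s.re + 1 + 1 / p) := by
    apply Real.rpow_le_rpow_of_exponent_le (by norm_num)
    have : 0 < 1 / p := by positivity
    rw [← hσ]; linarith
  calc ‖deriv f s‖ ≤ C / (1 / 3) := hcauchy
    _ = 3 * (realZeta (4 / 3) ^ (1 / p) * HpNorm g) := by rw [hC]; ring
    _ ≤ 3 * (realZeta (4 / 3) ^ (1 / p) * (2 ^ (-(σ - 1)) * HpNorm f)) := by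
        apply mul_le_mul_of_nonneg_left _ (by norm_num)
        exact mul_le_mul_of_nonneg_left htrans' hζ43p.le
    _ ≤ 3 * realZeta (4 / 3) ^ (1 / p) * 2 ^ (-s.re + 1 + 1 / p) * HpNorm f := by
        rw [show 3 * realZeta (4 / 3) ^ (1 / p) * 2 ^ (-s.re + 1 + 1 / p) * HpNorm f
          = 3 * (realZeta (4 / 3) ^ (1 / p) * (2 ^ (-s.re + 1 + 1 / p) * HpNorm f)) by ring]
        apply mul_le_mul_of_nonneg_left _ (by norm_num)
        apply mul_le_mul_of_nonneg_left _ hζ43p.le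
        exact mul_le_mul_of_nonneg_right hpow hnormf
end
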